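/- Fix real numbers j > 0 and h ≥ 0. For z ∈ ℝ set y(z) = √j·z, t_*(z) = y(z)/2 + √(h²/2 + y(z)²/4), s_*(z) = −y(z)/2 + √(h²/2 + y(z)²/4), and define F̂(z) = −jz²/2 − t_*(z)² + 2 t_*(z) y(z) + h·log t_*(z) and Û(z) = −jz²/2 − s_*(z)² − 2 s_*(z) y(z) + h·log s_*(z), with the convention that the term h·log s_*(z) equals 0 when h = 0. Then F̂ is strictly increasing on [1,∞) and Û is strictly decreasing on [1,∞). -/

import Mathlib

private lemma auxDq {h j x : ℝ} (hx : (0:ℝ) < x) (hj : 0 < j) :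
    HasDerivAt (fun z : ℝ => h ^ 2 / 2 + j * z ^ 2 / 4) (j * x / 2) x := by
  have := (((hasDerivAt_pow 2 x).const_mul j).div_const 4).const_add (h ^ 2 / 2)
  convert this using 1
  · rfl
  · rfl
  push_cast
  ring

private lemma auxDR {h j x : ℝ} (hx : (0:ℝ) < x) (hj : 0 < j)
    (hq : 0 < h ^ 2 / 2 + j * x ^ 2 / 4) :
    HasDerivAt (fun z : ℝ => Real.sqrt (h ^ 2 / 2 + j * z ^ 2 / 4))
      (j * x / (4 * Real.sqrt (h ^ 2 / 2 + j * x ^ 2 / 4))) x := by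
  have h2 := (Real.hasDerivAt_sqrt hq.ne').comp x (auxDq hx hj)
  have hR0 : 0 < Real.sqrt (h ^ 2 / 2 + j * x ^ 2 / 4) := Real.sqrt_pos.mpr hq
  convert h2 using 1
  · rfl
  · rfl
  · rfl
  field_simp
  ring

set_option maxHeartbeats 1000000 in
/-- Lemma B.2(1): the exponent `F̂` of the growing fundamental solution is strictly increasing
on `[1,∞)` and the exponent `Û` of the decaying fundamental solution is strictly decreasing on
`[1,∞)`.  (Since `Real.log 0 = 0` in Mathlib, the term `h · log s_*(z)` automatically equals
`0` in the degenerate case `h = 0`, where `s_*(z) = 0`.) -/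
theorem exponent_monotonicity (j h : ℝ) (hj : 0 < j) (hh : 0 ≤ h)
    (y tstar sstar Fhat Uhat : ℝ → ℝ)
    (hy : ∀ z, y z = Real.sqrt j * z)
    (ht : ∀ z, tstar z = y z / 2 + Real.sqrt (h ^ 2 / 2 + (y z) ^ 2 / 4))
    (hs : ∀ z, sstar z = -(y z) / 2 + Real.sqrt (h ^ 2 / 2 + (y z) ^ 2 / 4))
    (hF : ∀ z, Fhat z =
      -j * z ^ 2 / 2 - (tstar z) ^ 2 + 2 * tstar z * y z + h * Real.log (tstar z))
    (hU : ∀ z, Uhat z =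
      -j * z ^ 2 / 2 - (sstar z) ^ 2 - 2 * sstar z * y z + h * Real.log (sstar z)) :
    StrictMonoOn Fhat (Set.Ici (1 : ℝ)) ∧ StrictAntiOn Uhat (Set.Ici (1 : ℝ)) := by
  have hsj : 0 < Real.sqrt j := Real.sqrt_pos.mpr hj
  set s : ℝ := Real.sqrt j with hsdef
  have hs2 : s ^ 2 = j := Real.sq_sqrt hj.le
  have hq : ∀ x : ℝ, 1 ≤ x → 0 < h ^ 2 / 2 + j * x ^ 2 / 4 := by
    intro x hx
    nlinarith [sq_nonneg h, mul_pos hj (show (0:ℝ) < x ^ 2 by nlinarith)]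
  have harg : ∀ z : ℝ, h ^ 2 / 2 + (y z) ^ 2 / 4 = h ^ 2 / 2 + j * z ^ 2 / 4 := by
    intro z
    rw [hy, mul_pow, hs2]
  -- positivity of t_*
  have htpos : ∀ x : ℝ, 1 ≤ x →
      0 < s * x / 2 + Real.sqrt (h ^ 2 / 2 + j * x ^ 2 / 4) := by
    intro x hx
    have h1 : 0 < s * x := mul_pos hsj (by linarith)
    have h2 := Real.sqrt_nonneg (h ^ 2 / 2 + j * x ^ 2 / 4)
    linarith
  -- continuity of t_*
  have ct : Continuous (fun z : ℝ => s * z / 2 + Real.sqrt (h ^ 2 / 2 + j * z ^ 2 / 4)) := by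
    fun_prop
  -- explicit form of Fhat
  have hFeq : Fhat = fun z : ℝ =>
      -j * z ^ 2 / 2 - (s * z / 2 + Real.sqrt (h ^ 2 / 2 + j * z ^ 2 / 4)) ^ 2
        + 2 * ((s * z / 2 + Real.sqrt (h ^ 2 / 2 + j * z ^ 2 / 4)) * (s * z))
        + h * Real.log (s * z / 2 + Real.sqrt (h ^ 2 / 2 + j * z ^ 2 / 4)) := by
    funext z
    rw [hF z, ht z, harg z, hy z]
    ring
  -- derivative of Fhat
  have hderivF : ∀ x : ℝ, 1 ≤ x →
      HasDerivAt (fun z : ℝ =>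
        -j * z ^ 2 / 2 - (s * z / 2 + Real.sqrt (h ^ 2 / 2 + j * z ^ 2 / 4)) ^ 2
          + 2 * ((s * z / 2 + Real.sqrt (h ^ 2 / 2 + j * z ^ 2 / 4)) * (s * z))
          + h * Real.log (s * z / 2 + Real.sqrt (h ^ 2 / 2 + j * z ^ 2 / 4)))
        (s * (h ^ 2 + h + j * x ^ 2) / (2 * Real.sqrt (h ^ 2 / 2 + j * x ^ 2 / 4))) x := by
    intro x hx
    have hx0 : (0:ℝ) < x := by linarith
    have hqx := hq x hx
    have hR0 : 0 < Real.sqrt (h ^ 2 / 2 + j * x ^ 2 / 4) := Real.sqrt_pos.mpr hqx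
    have hR2 : (Real.sqrt (h ^ 2 / 2 + j * x ^ 2 / 4)) ^ 2 = h ^ 2 / 2 + j * x ^ 2 / 4 :=
      Real.sq_sqrt hqx.le
    have ht0 := htpos x hx
    have dR := auxDR hx0 hj hqx
    have dt : HasDerivAt (fun z : ℝ => s * z / 2 + Real.sqrt (h ^ 2 / 2 + j * z ^ 2 / 4))
        (s / 2 + s ^ 2 * x / (4 * Real.sqrt (h ^ 2 / 2 + j * x ^ 2 / 4))) x := by
      have := ((hasDerivAt_id' (x := x)).const_mul s).div_const 2 |>.add dR
      convert this using 1
      · rfl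
      · rfl
      · rfl
      rw [hs2]
      ring
    have d0 : HasDerivAt (fun z : ℝ => -j * z ^ 2 / 2) (-j * x) x := by
      have := ((hasDerivAt_pow 2 x).const_mul (-j)).div_const 2
      convert this using 1
      · rfl
      · rfl
      push_cast
      ring
    have dsq := dt.pow 2
    have dprod := (dt.mul ((hasDerivAt_id' (x := x)).const_mul s)).const_mul 2
    have dlog := (dt.log ht0.ne').const_mul h
    have draw := ((d0.sub dsq).add dprod).add dlog
    convert draw using 1
    · rfl
    · rfl
    · rfl
    set R : ℝ := Real.sqrt (h ^ 2 / 2 + j * x ^ 2 / 4) with hRdef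
    rw [← hs2] at hR2 ⊢
    have hdiv : (s / 2 + s ^ 2 * x / (4 * R)) / (s * x / 2 + R) = s / (2 * R) := by
      rw [div_eq_div_iff ht0.ne' (by positivity : (2 * R) ≠ 0)]
      field_simp
      ring
    push_cast
    rw [hdiv]
    field_simp
    linear_combination (-8) * hR2
  -- conclude F part
  have hFmono : StrictMonoOn Fhat (Set.Ici (1:ℝ)) := by
    rw [hFeq]
    apply strictMonoOn_of_deriv_pos (convex_Ici 1)
    · apply ContinuousOn.add
      · fun_prop
      · exact continuousOn_const.mul (ct.continuousOn.log (fun z hz => (htpos z hz).ne'))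
    · intro x hx
      rw [interior_Ici] at hx
      have hx1 : (1:ℝ) < x := hx
      rw [(hderivF x hx.le).deriv]
      have h1 : 0 < h ^ 2 + h + j * x ^ 2 := by
        nlinarith [mul_pos hj (show (0:ℝ) < x ^ 2 by nlinarith [hx1, mul_pos (show (0:ℝ) < x by linarith) (show (0:ℝ) < x by linarith)]), sq_nonneg h]
      have h2 := Real.sqrt_pos.mpr (hq x hx.le)
      exact div_pos (mul_pos hsj h1) (by linarith)
  rcases eq_or_lt_of_le hh with h0 | h0
  · -- degenerate case h = 0
    refine ⟨hFmono, ?_⟩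
    have hUval : ∀ z : ℝ, 1 ≤ z → Uhat z = -j * z ^ 2 / 2 := by
      intro z hz
      have hz0 : (0:ℝ) ≤ z := by linarith
      have hsz : (0:ℝ) ≤ s * z := mul_nonneg hsj.le hz0
      have hss : sstar z = 0 := by
        rw [hs z, hy z, ← h0]
        rw [show (0:ℝ) ^ 2 / 2 + (s * z) ^ 2 / 4 = (s * z / 2) ^ 2 by ring]
        rw [Real.sqrt_sq (by linarith : (0:ℝ) ≤ s * z / 2)]
        ring
      rw [hU z, hss, hy z, ← h0]
      norm_num
    intro a ha b hb hab
    rw [hUval a ha, hUval b hb]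
    have ha' : (1:ℝ) ≤ a := ha
    have hb' : (1:ℝ) ≤ b := hb
    nlinarith [mul_pos hj (mul_pos (sub_pos.mpr hab) (show (0:ℝ) < b + a by linarith))]
  · -- nondegenerate case 0 < h
    have hqU : ∀ x : ℝ, 0 < h ^ 2 / 2 + j * x ^ 2 / 4 := by
      intro x
      nlinarith [mul_pos h0 h0, mul_nonneg hj.le (sq_nonneg x)]
    have hwpos : ∀ x : ℝ, 0 < -(s * x) / 2 + Real.sqrt (h ^ 2 / 2 + j * x ^ 2 / 4) := by
      intro x
      have hR0 := Real.sqrt_pos.mpr (hqU x)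
      have hR2 := Real.sq_sqrt (hqU x).le
      nlinarith [hR2, mul_pos h0 h0, hs2, hR0]
    have cw : Continuous (fun z : ℝ => -(s * z) / 2 + Real.sqrt (h ^ 2 / 2 + j * z ^ 2 / 4)) := by
      fun_prop
    have hUeq : Uhat = fun z : ℝ =>
        -j * z ^ 2 / 2 - (-(s * z) / 2 + Real.sqrt (h ^ 2 / 2 + j * z ^ 2 / 4)) ^ 2
          - 2 * ((-(s * z) / 2 + Real.sqrt (h ^ 2 / 2 + j * z ^ 2 / 4)) * (s * z))
          + h * Real.log (-(s * z) / 2 + Real.sqrt (h ^ 2 / 2 + j * z ^ 2 / 4)) := by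
      funext z
      rw [hU z, hs z, harg z, hy z]
      ring
    have hderivU : ∀ x : ℝ, 1 ≤ x →
        HasDerivAt (fun z : ℝ =>
          -j * z ^ 2 / 2 - (-(s * z) / 2 + Real.sqrt (h ^ 2 / 2 + j * z ^ 2 / 4)) ^ 2
            - 2 * ((-(s * z) / 2 + Real.sqrt (h ^ 2 / 2 + j * z ^ 2 / 4)) * (s * z))
            + h * Real.log (-(s * z) / 2 + Real.sqrt (h ^ 2 / 2 + j * z ^ 2 / 4)))
          (-(s * (h ^ 2 + h + j * x ^ 2) / (2 * Real.sqrt (h ^ 2 / 2 + j * x ^ 2 / 4)))) x := by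
      intro x hx
      have hx0 : (0:ℝ) < x := by linarith
      have hqx := hqU x
      have hR0 : 0 < Real.sqrt (h ^ 2 / 2 + j * x ^ 2 / 4) := Real.sqrt_pos.mpr hqx
      have hR2 : (Real.sqrt (h ^ 2 / 2 + j * x ^ 2 / 4)) ^ 2 = h ^ 2 / 2 + j * x ^ 2 / 4 :=
        Real.sq_sqrt hqx.le
      have hw0 := hwpos x
      have dR := auxDR hx0 hj hqx
      have dw : HasDerivAt (fun z : ℝ => -(s * z) / 2 + Real.sqrt (h ^ 2 / 2 + j * z ^ 2 / 4))
          (-s / 2 + s ^ 2 * x / (4 * Real.sqrt (h ^ 2 / 2 + j * x ^ 2 / 4))) x := by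
        have := ((((hasDerivAt_id' (x := x)).const_mul s).neg).div_const 2).add dR
        convert this using 1
        · rfl
        · rfl
        · rfl
        rw [hs2]
        ring
      have d0 : HasDerivAt (fun z : ℝ => -j * z ^ 2 / 2) (-j * x) x := by
        have := ((hasDerivAt_pow 2 x).const_mul (-j)).div_const 2
        convert this using 1
        · rfl
        · rfl
        push_cast
        ring
      have dsq := dw.pow 2
      have dprod := (dw.mul ((hasDerivAt_id' (x := x)).const_mul s)).const_mul 2
      have dlog := (dw.log hw0.ne').const_mul h
      have draw := ((d0.sub dsq).sub dprod).add dlog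
      convert draw using 1
      · rfl
      · rfl
      · rfl
      set R : ℝ := Real.sqrt (h ^ 2 / 2 + j * x ^ 2 / 4) with hRdef
      rw [← hs2] at hR2 ⊢
      have hdiv : (-s / 2 + s ^ 2 * x / (4 * R)) / (-(s * x) / 2 + R) = -s / (2 * R) := by
        rw [div_eq_div_iff hw0.ne' (by positivity : (2 * R) ≠ 0)]
        field_simp
        ring
      push_cast
      rw [hdiv]
      field_simp
      linear_combination 8 * hR2
    have hUanti : StrictAntiOn Uhat (Set.Ici (1:ℝ)) := by
      rw [hUeq]
      apply strictAntiOn_of_deriv_neg (convex_Ici 1)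
      · apply ContinuousOn.add
        · fun_prop
        · exact continuousOn_const.mul (cw.continuousOn.log (fun z _ => (hwpos z).ne'))
      · intro x hx
        rw [interior_Ici] at hx
        have hx1 : (1:ℝ) < x := hx
        rw [(hderivU x hx.le).deriv]
        have h1 : 0 < h ^ 2 + h + j * x ^ 2 := by
          nlinarith [mul_pos hj (show (0:ℝ) < x ^ 2 by nlinarith [hx1, mul_pos (show (0:ℝ) < x by linarith) (show (0:ℝ) < x by linarith)]), sq_nonneg h]
        have h2 := Real.sqrt_pos.mpr (hqU x)
        have := div_pos (mul_pos hsj h1) (show (0:ℝ) < 2 * Real.sqrt (h ^ 2 / 2 + j * x ^ 2 / 4) by linarith)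
        linarith
    exact ⟨hFmono, hUanti⟩
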